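/- Let (Ω, F, P) be a probability space with a filtration (F_k)_{k∈ℕ}, let ε > 0, d, p ≥ 1, and let μ be a Borel probability measure on ℝ^d (with the sup norm) such that there exist y, z ∈ supp(μ) with ‖y − z‖∞ > 2ε. Let f : ℝ^d × ℝ^p → ℝ^d be measurable, (u_k)_{k∈ℕ} a deterministic sequence in ℝ^p, and x_0 an F_0-measurable ℝ^d-valued random vector. Suppose (W_k)_{k∈ℕ} are ℝ^d-valued random vectors such that each W_k has law μ, is independent of F_k, and is F_{k+1}-measurable, and define the state trajectory recursively by x_{k+1} = f(x_k, u_k) + W_k. Let (x̂_{k+1})_{k∈ℕ} be any predictions such that each x̂_{k+1} is F_k-measurable. Then lim_{K→∞} P(‖x̂_{k+1} − x_{k+1}‖∞ ≤ ε for all 0 ≤ k < K) = 0. -/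

import Mathlib

open MeasureTheory ProbabilityTheory Filter

/-- The support of a Borel measure: the set of points all of whose open neighborhoods
have positive measure. -/
def measureSupport {E : Type*} [TopologicalSpace E] [MeasurableSpace E]
    (μ : Measure E) : Set E :=
  {x | ∀ U : Set E, IsOpen U → x ∈ U → 0 < μ U}

/-- Lemma 1 of the paper: for the stochastic dynamical system
`x (k+1) = f (x k) (u k) + W k` driven by i.i.d. noise with law `μ` whose support has
sup-norm diameter greater than `2ε`, and any adapted predictions `xh (k+1)`
(each `F k`-measurable), the `ε`-accurate prediction probability over a horizon `K`
tends to `0` as `K → ∞`. -/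
theorem stmt4 (d p : ℕ) (hd : 1 ≤ d) (hp : 1 ≤ p) (ε : ℝ) (hε : 0 < ε)
    (Ω : Type*) (mΩ : MeasurableSpace Ω) (P : Measure Ω) [IsProbabilityMeasure P]
    (F : Filtration ℕ mΩ)
    (μ : Measure (Fin d → ℝ)) [IsProbabilityMeasure μ]
    (y z : Fin d → ℝ) (hy : y ∈ measureSupport μ) (hz : z ∈ measureSupport μ)
    (hyz : 2 * ε < ‖y - z‖)
    (f : (Fin d → ℝ) → (Fin p → ℝ) → (Fin d → ℝ))
    (hf_meas : Measurable (Function.uncurry f))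
    (u : ℕ → (Fin p → ℝ))
    (W : ℕ → Ω → (Fin d → ℝ))
    (hW_law : ∀ k, Measure.map (W k) P = μ)
    (hW_indep : ∀ k, Indep (MeasurableSpace.comap (W k) inferInstance) (F k) P)
    (hW_meas : ∀ k, Measurable[F (k + 1)] (W k))
    (x : ℕ → Ω → (Fin d → ℝ))
    (hx0_meas : Measurable[F 0] (x 0))
    (hx_rec : ∀ k ω, x (k + 1) ω = f (x k ω) (u k) + W k ω)
    (xh : ℕ → Ω → (Fin d → ℝ))
    (hxh_meas : ∀ k, Measurable[F k] (xh (k + 1))) :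
    Tendsto (fun K : ℕ => P {ω | ∀ k < K, ‖xh (k + 1) ω - x (k + 1) ω‖ ≤ ε})
      atTop (nhds 0) := by
  -- radius
  set r : ℝ := (‖y - z‖ - 2 * ε) / 2 with hr_def
  have hr : 0 < r := by simp only [hr_def]; linarith
  set q : ENNReal := min (μ (Metric.ball y r)) (μ (Metric.ball z r)) with hq_def
  have hq : 0 < q := by
    apply lt_min
    · exact hy (Metric.ball y r) Metric.isOpen_ball (Metric.mem_ball_self hr)
    · exact hz (Metric.ball z r) Metric.isOpen_ball (Metric.mem_ball_self hr)
  have hq1 : q ≤ 1 := le_trans (min_le_left _ _) prob_le_one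
  -- key pointwise bound
  have key : ∀ a : Fin d → ℝ, μ {w | ‖a - w‖ ≤ ε} ≤ 1 - q := by
    intro a
    have hdisj : Disjoint {w | ‖a - w‖ ≤ ε} (Metric.ball y r) ∨
        Disjoint {w | ‖a - w‖ ≤ ε} (Metric.ball z r) := by
      by_contra h
      push_neg at h
      obtain ⟨h1, h2⟩ := h
      obtain ⟨w1, hw1a, hw1y⟩ := Set.not_disjoint_iff.mp h1
      obtain ⟨w2, hw2a, hw2z⟩ := Set.not_disjoint_iff.mp h2
      simp only [Set.mem_setOf_eq] at hw1a hw2a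
      rw [Metric.mem_ball, dist_eq_norm] at hw1y hw2z
      have : ‖y - z‖ ≤ ‖w1 - y‖ + ‖a - w1‖ + ‖a - w2‖ + ‖w2 - z‖ := by
        have h3 : y - z = -(w1 - y) + -(a - w1) + (a - w2) + (w2 - z) := by abel
        calc ‖y - z‖ = ‖-(w1 - y) + -(a - w1) + (a - w2) + (w2 - z)‖ := by rw [← h3]
          _ ≤ ‖-(w1 - y) + -(a - w1) + (a - w2)‖ + ‖w2 - z‖ := norm_add_le _ _
          _ ≤ ‖-(w1 - y) + -(a - w1)‖ + ‖a - w2‖ + ‖w2 - z‖ := by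
              gcongr; exact norm_add_le _ _
          _ ≤ ‖-(w1 - y)‖ + ‖-(a - w1)‖ + ‖a - w2‖ + ‖w2 - z‖ := by
              gcongr; exact norm_add_le _ _
          _ = ‖w1 - y‖ + ‖a - w1‖ + ‖a - w2‖ + ‖w2 - z‖ := by rw [norm_neg, norm_neg]
      have hreq : r = (‖y - z‖ - 2 * ε) / 2 := hr_def
      linarith
    have hmono : ∀ s : Set (Fin d → ℝ), MeasurableSet s → q ≤ μ s →
        Disjoint {w | ‖a - w‖ ≤ ε} s → μ {w | ‖a - w‖ ≤ ε} ≤ 1 - q := by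
      intro s hs hqs hd'
      have h1 : μ {w | ‖a - w‖ ≤ ε} ≤ μ sᶜ := by
        apply measure_mono
        exact fun w hw => Set.disjoint_left.mp hd' hw
      have h2 : μ sᶜ = 1 - μ s := by
        rw [measure_compl hs (measure_ne_top μ s), measure_univ]
      rw [h2] at h1
      exact le_trans h1 (tsub_le_tsub_left hqs 1)
    rcases hdisj with h | h
    · exact hmono _ Metric.isOpen_ball.measurableSet (min_le_left _ _) h
    · exact hmono _ Metric.isOpen_ball.measurableSet (min_le_right _ _) h
  -- measurability of trajectory
  have hx_meas : ∀ k, Measurable[F k] (x k) := by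
    intro k
    induction k with
    | zero => exact hx0_meas
    | succ k ih =>
      have h1 : Measurable[F (k + 1)] (fun ω => f (x k ω) (u k)) := by
        exact hf_meas.comp ((ih.mono (F.mono (Nat.le_succ k)) le_rfl).prodMk measurable_const)
      have h2 : x (k + 1) = fun ω => f (x k ω) (u k) + W k ω := funext (hx_rec k)
      rw [h2]
      exact h1.add (hW_meas k)
  -- the reduced predictors
  set g : ℕ → Ω → (Fin d → ℝ) := fun k ω => xh (k + 1) ω - f (x k ω) (u k) with hg_def
  have hg_meas : ∀ k, Measurable[F k] (g k) := by
    intro k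
    exact (hxh_meas k).sub (hf_meas.comp ((hx_meas k).prodMk measurable_const))
  have hdiff : ∀ k ω, xh (k + 1) ω - x (k + 1) ω = g k ω - W k ω := by
    intro k ω
    rw [hx_rec k ω]; simp only [hg_def]; abel
  -- events
  set S : ℕ → Set Ω := fun K => {ω | ∀ k < K, ‖g k ω - W k ω‖ ≤ ε} with hS_def
  have hA_meas : ∀ k, MeasurableSet[F (k + 1)] {ω | ‖g k ω - W k ω‖ ≤ ε} := by
    intro k
    have hmn : Measurable[F (k + 1)] (fun ω => ‖g k ω - W k ω‖) :=
      measurable_norm.comp (((hg_meas k).mono (F.mono (Nat.le_succ k)) le_rfl).sub (hW_meas k))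
    exact hmn measurableSet_Iic
  have hS_meas : ∀ K, MeasurableSet[F K] (S K) := by
    intro K
    have hSeq : S K = ⋂ k, ⋂ _ : k < K, {ω | ‖g k ω - W k ω‖ ≤ ε} := by
      ext ω; simp [hS_def]
    rw [hSeq]
    exact MeasurableSet.iInter fun k => MeasurableSet.iInter fun hk =>
      (F.mono hk) _ (hA_meas k)
  -- main step
  have step : ∀ K, P (S (K + 1)) ≤ (1 - q) * P (S K) := by
    intro K
    -- Y pairs the F K-measurable data
    set Y : Ω → (Fin d → ℝ) × ℝ := fun ω => (g K ω, (S K).indicator (fun _ => (1 : ℝ)) ω)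
      with hY_def
    have hY_measF : Measurable[F K] Y := by
      apply Measurable.prodMk (hg_meas K)
      exact measurable_const.indicator (hS_meas K)
    have hY_meas : Measurable Y := hY_measF.mono (F.le K) le_rfl
    have hW_measK : Measurable (W K) := (hW_meas K).mono (F.le (K + 1)) le_rfl
    have hindep : IndepFun Y (W K) P := by
      have h1 : Indep (F K) (MeasurableSpace.comap (W K) inferInstance) P :=
        (hW_indep K).symm
      exact indep_of_indep_of_le_left h1 hY_measF.comap_le
    have hmap : P.map (fun ω => (Y ω, W K ω)) = (P.map Y).prod (P.map (W K)) :=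
      (indepFun_iff_map_prod_eq_prod_map_map hY_meas.aemeasurable
        hW_measK.aemeasurable).mp hindep
    set T : Set (((Fin d → ℝ) × ℝ) × (Fin d → ℝ)) :=
      {c | c.1.2 = 1 ∧ ‖c.1.1 - c.2‖ ≤ ε} with hT_def
    have hT_meas : MeasurableSet T := by
      apply MeasurableSet.inter
      · exact (measurable_snd.comp measurable_fst) (measurableSet_singleton 1)
      · exact ((measurable_fst.comp measurable_fst).sub measurable_snd).norm measurableSet_Iic
    have hpre : S (K + 1) = (fun ω => (Y ω, W K ω)) ⁻¹' T := by
      ext ω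
      simp only [Set.mem_preimage, hT_def, Set.mem_setOf_eq, hY_def]
      constructor
      · intro h
        have hSK : ω ∈ S K := by
          intro k hk; exact h k (Nat.lt_succ_of_lt hk)
        refine ⟨by simp [Set.indicator_of_mem hSK], h K (Nat.lt_succ_self K)⟩
      · rintro ⟨h1, h2⟩
        have hSK : ω ∈ S K := by
          by_contra hc
          rw [Set.indicator_of_notMem hc] at h1
          exact one_ne_zero h1.symm
        intro k hk
        rcases Nat.lt_succ_iff_lt_or_eq.mp hk with h | h
        · exact hSK k h
        · subst h; exact h2
    have hmeas_pair : Measurable (fun ω => (Y ω, W K ω)) := hY_meas.prodMk hW_measK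
    rw [hpre, ← Measure.map_apply hmeas_pair hT_meas, hmap, hW_law K,
      Measure.prod_apply hT_meas]
    set U : Set ((Fin d → ℝ) × ℝ) := Prod.snd ⁻¹' ({1} : Set ℝ) with hU_def
    have hU_meas : MeasurableSet U := measurable_snd (measurableSet_singleton 1)
    have hbound : ∀ c : (Fin d → ℝ) × ℝ, μ (Prod.mk c ⁻¹' T) ≤
        Set.indicator U (fun _ => 1 - q) c := by
      intro c
      by_cases hc : c ∈ U
      · rw [Set.indicator_of_mem hc]
        refine le_trans (measure_mono ?_) (key c.1)
        intro w hw
        exact hw.2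
      · rw [Set.indicator_of_notMem hc]
        have hemp : Prod.mk c ⁻¹' T = ∅ := by
          ext w
          simp only [Set.mem_preimage, hT_def, Set.mem_setOf_eq, Set.mem_empty_iff_false]
          exact iff_of_false (fun h => hc (Set.mem_singleton_iff.mpr h.1)) not_false
        simp [hemp]
    calc ∫⁻ c, μ (Prod.mk c ⁻¹' T) ∂(P.map Y)
        ≤ ∫⁻ c, Set.indicator U (fun _ => 1 - q) c ∂(P.map Y) :=
          lintegral_mono hbound
      _ = (1 - q) * (P.map Y) U := lintegral_indicator_const hU_meas _
      _ = (1 - q) * P (S K) := by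
          rw [Measure.map_apply hY_meas hU_meas]
          congr 1
          apply congrArg
          ext ω
          simp only [Set.mem_preimage, hY_def, hU_def, Set.mem_singleton_iff]
          constructor
          · intro h
            by_contra hc
            rw [Set.indicator_of_notMem hc] at h
            exact one_ne_zero h.symm
          · intro h; simp [Set.indicator_of_mem h]
  -- geometric bound
  have hbound : ∀ K, P (S K) ≤ (1 - q) ^ K := by
    intro K
    induction K with
    | zero => simpa using prob_le_one
    | succ K ih =>
      calc P (S (K + 1)) ≤ (1 - q) * P (S K) := step K
        _ ≤ (1 - q) * (1 - q) ^ K := by gcongr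
        _ = (1 - q) ^ (K + 1) := by ring
  have hlt : (1 : ENNReal) - q < 1 :=
    ENNReal.sub_lt_self ENNReal.one_ne_top one_ne_zero hq.ne'
  have htend : Tendsto (fun K : ℕ => (1 - q) ^ K) atTop (nhds 0) :=
    ENNReal.tendsto_pow_atTop_nhds_zero_of_lt_one hlt
  have heq : ∀ K, P {ω | ∀ k < K, ‖xh (k + 1) ω - x (k + 1) ω‖ ≤ ε} = P (S K) := by
    intro K
    congr 1
    ext ω
    simp only [Set.mem_setOf_eq, hS_def]
    constructor <;> intro h k hk
    · rw [← hdiff k ω]; exact h k hk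
    · rw [hdiff k ω]; exact h k hk
  simp only [heq]
  exact tendsto_of_tendsto_of_tendsto_of_le_of_le tendsto_const_nhds htend
    (fun K => zero_le) hbound
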